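/- Let f be an isothermic immersion with frame satisfying f_v = n × f_u (curvature-line conformal parametrization) and suppose the v-curve through each u₀ lies on a sphere: Z(u) - f(u,v) = α(u)n(u,v) + β(u)e^{-h(u,v)}f_u(u,v), where e^{2h} is the conformal factor. Using the structure equations n_v = -k₂ f_v, f_{uv} = h_v f_u + h_u f_v, and setting q = k₂e^h, differentiation in v shows that sphericality of the v-curves is equivalent to the scalar identity e^{h(u,v)} - α(u)q(u,v) + β(u)h_u(u,v) = 0 for all (u,v). -/

import Mathlib

open RealInnerProductSpace

/-- Auxiliary: differentiability of `h` in `v`, derived from the conformal factor. -/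
lemma aux_hdiff
    (fu fv : ℝ → ℝ → EuclideanSpace ℝ (Fin 3))
    (h : ℝ → ℝ → ℝ)
    (hconf1 : ∀ u v, ⟪fu u v, fu u v⟫ = Real.exp (2 * h u v))
    (hfuv : ∀ u v, HasDerivAt (fun t => fu u t)
      ((deriv (fun t => h u t) v) • fu u v + (deriv (fun t => h t v) u) • fv u v) v)
    (u v : ℝ) : HasDerivAt (fun t => h u t) (deriv (fun t => h u t) v) v := by
  have heq : (fun t => h u t) = fun t => Real.log (⟪fu u t, fu u t⟫) / 2 := by
    funext t
    rw [hconf1, Real.log_exp]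
    ring
  rw [heq]
  apply DifferentiableAt.hasDerivAt
  apply DifferentiableAt.div_const
  apply DifferentiableAt.log
  · exact (hfuv u v).differentiableAt.inner ℝ (hfuv u v).differentiableAt
  · rw [hconf1]
    exact (Real.exp_pos _).ne'

/-- Auxiliary: the `v`-derivative of `α • n + (β e^{-h}) • f_u`. -/
lemma aux_deriv
    (fu fv n : ℝ → ℝ → EuclideanSpace ℝ (Fin 3))
    (h k₂ : ℝ → ℝ → ℝ)
    (hconf1 : ∀ u v, ⟪fu u v, fu u v⟫ = Real.exp (2 * h u v))
    (hfuv : ∀ u v, HasDerivAt (fun t => fu u t)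
      ((deriv (fun t => h u t) v) • fu u v + (deriv (fun t => h t v) u) • fv u v) v)
    (hnv : ∀ u v, HasDerivAt (fun t => n u t) (-(k₂ u v) • fv u v) v)
    (α β u v : ℝ) :
    HasDerivAt (fun t => α • n u t + (β * Real.exp (-(h u t))) • fu u t)
      ((-(α * k₂ u v) + β * Real.exp (-(h u v)) * deriv (fun t => h t v) u) • fv u v) v := by
  have hd := aux_hdiff fu fv h hconf1 hfuv u v
  have hexp : HasDerivAt (fun t => β * Real.exp (-(h u t)))
      (β * (Real.exp (-(h u v)) * -(deriv (fun t => h u t) v))) v :=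
    (hd.neg.exp).const_mul β
  have hsmul := hexp.smul (hfuv u v)
  have hn := (hnv u v).const_smul α
  have := hn.add hsmul
  refine this.congr_deriv ?_
  module

theorem stmt17
    (f fu fv n : ℝ → ℝ → EuclideanSpace ℝ (Fin 3))
    (h k₂ : ℝ → ℝ → ℝ)
    (hfu : ∀ u v, HasDerivAt (fun t => f t v) (fu u v) u)
    (hfv : ∀ u v, HasDerivAt (fun t => f u t) (fv u v) v)
    (hconf1 : ∀ u v, ⟪fu u v, fu u v⟫ = Real.exp (2 * h u v))
    (hconf2 : ∀ u v, ⟪fv u v, fv u v⟫ = Real.exp (2 * h u v))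
    (hconf3 : ∀ u v, ⟪fu u v, fv u v⟫ = 0)
    (hfvne : ∀ u v, fv u v ≠ 0)
    (hfuv : ∀ u v, HasDerivAt (fun t => fu u t)
      ((deriv (fun t => h u t) v) • fu u v + (deriv (fun t => h t v) u) • fv u v) v)
    (hnv : ∀ u v, HasDerivAt (fun t => n u t) (-(k₂ u v) • fv u v) v) :
    (∃ Z : ℝ → EuclideanSpace ℝ (Fin 3), ∃ α β : ℝ → ℝ,
        Differentiable ℝ α ∧ Differentiable ℝ β ∧
        ∀ u v, Z u - f u v = α u • n u v + β u • (Real.exp (-(h u v)) • fu u v)) ↔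
    (∃ α β : ℝ → ℝ, Differentiable ℝ α ∧ Differentiable ℝ β ∧
        ∀ u v, Real.exp (h u v) - α u * (k₂ u v * Real.exp (h u v))
          + β u * deriv (fun t => h t v) u = 0) := by
  constructor
  · rintro ⟨Z, α, β, hα, hβ, hZ⟩
    refine ⟨α, β, hα, hβ, fun u v => ?_⟩
    -- LHS derivative
    have hL : HasDerivAt (fun t => Z u - f u t) (-fv u v) v := by
      exact ((hasDerivAt_const v (Z u)).sub (hfv u v)).congr_deriv (by simp)
    -- rewrite LHS function via the decomposition
    have hfun : (fun t => Z u - f u t)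
        = fun t => α u • n u t + (β u * Real.exp (-(h u t))) • fu u t := by
      funext t
      rw [hZ u t, smul_smul]
    rw [hfun] at hL
    have hR := aux_deriv fu fv n h k₂ hconf1 hfuv hnv (α u) (β u) u v
    have huniq := hL.unique hR
    have hcoef : (-1 - (-(α u * k₂ u v) + β u * Real.exp (-(h u v)) * deriv (fun t => h t v) u))
        • fv u v = 0 := by
      rw [sub_smul]
      rw [← huniq]
      module
    have heq : (-1 : ℝ) - (-(α u * k₂ u v) + β u * Real.exp (-(h u v)) * deriv (fun t => h t v) u)
        = 0 := by
      rcases smul_eq_zero.mp hcoef with h1 | h1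
      · exact h1
      · exact absurd h1 (hfvne u v)
    have hkey : Real.exp (-(h u v)) * Real.exp (h u v) = 1 := by
      rw [← Real.exp_add]; simp
    linear_combination -Real.exp (h u v) * heq
      - (β u * deriv (fun t => h t v) u) * hkey
  · rintro ⟨α, β, hα, hβ, hs⟩
    refine ⟨fun u => f u 0 + α u • n u 0 + (β u * Real.exp (-(h u 0))) • fu u 0,
      α, β, hα, hβ, fun u v => ?_⟩
    set g : ℝ → EuclideanSpace ℝ (Fin 3) :=
      fun t => f u t + α u • n u t + (β u * Real.exp (-(h u t))) • fu u t with hg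
    have hderiv : ∀ w, HasDerivAt g 0 w := by
      intro w
      have hR := aux_deriv fu fv n h k₂ hconf1 hfuv hnv (α u) (β u) u w
      have hsum := ((hfv u w).add hR)
      have hfun : (fun t => f u t + (α u • n u t + (β u * Real.exp (-(h u t))) • fu u t)) = g := by
        funext t; rw [hg]; abel
      change HasDerivAt (fun t => f u t + (α u • n u t + (β u * Real.exp (-(h u t))) • fu u t)) _ w at hsum
      rw [hfun] at hsum
      have hc : (1 : ℝ) + (-(α u * k₂ u w) + β u * Real.exp (-(h u w)) * deriv (fun t => h t w) u)
          = 0 := by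
        have hkey : Real.exp (-(h u w)) * Real.exp (h u w) = 1 := by
          rw [← Real.exp_add]; simp
        have hsw := hs u w
        linear_combination Real.exp (-(h u w)) * hsw
          + (α u * k₂ u w - 1) * hkey
      have hz : fv u w + (-(α u * k₂ u w)
          + β u * Real.exp (-(h u w)) * deriv (fun t => h t w) u) • fv u w = 0 := by
        have : fv u w + (-(α u * k₂ u w)
            + β u * Real.exp (-(h u w)) * deriv (fun t => h t w) u) • fv u w
            = (1 + (-(α u * k₂ u w)
              + β u * Real.exp (-(h u w)) * deriv (fun t => h t w) u)) • fv u w := by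
          module
        rw [this, hc, zero_smul]
      exact hz ▸ hsum
    have hconst : g v = g 0 := by
      have hdg : Differentiable ℝ g := fun w => (hderiv w).differentiableAt
      have h0 : ∀ w, deriv g w = 0 := fun w => (hderiv w).deriv
      exact is_const_of_deriv_eq_zero hdg h0 v 0
    have hgv : g v = f u v + α u • n u v + (β u * Real.exp (-(h u v))) • fu u v := rfl
    have hg0 : g 0 = f u 0 + α u • n u 0 + (β u * Real.exp (-(h u 0))) • fu u 0 := rfl
    beta_reduce
    rw [smul_smul, ← hg0, ← hconst, hgv]
    abel
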